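/- Let (X,d) be a length space and let Γ act on X freely, properly discontinuously, cocompactly and by isometries. Fix x₀ ∈ X. Then the orbit map γ ↦ γ·x₀ is a quasi-isometry from (Γ, ρ_S) (any word metric) to (X,d): there exist λ ≥ 1 and C ≥ 0 such that λ⁻¹ρ_S(γ₁,γ₂) − C ≤ d(γ₁·x₀, γ₂·x₀) ≤ λρ_S(γ₁,γ₂) + C for all γ₁,γ₂ ∈ Γ, and the orbit Γ·x₀ is a net in X (every point of X is within bounded distance of the orbit). -/

import Mathlib

open Set

/-- The word norm associated to a generating set `S`. -/
noncomputable def wordNorm {G : Type*} [Group G] (S : Set G) (g : G) : ℝ :=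
  sInf {r : ℝ | ∃ l : List G, (∀ s ∈ l, s ∈ S) ∧ l.prod = g ∧ (l.length : ℝ) = r}

/-- The word metric associated to a generating set `S`. -/
noncomputable def wordDist {G : Type*} [Group G] (S : Set G) (g h : G) : ℝ :=
  wordNorm S (g⁻¹ * h)

open Metric

section aux
variable {G : Type*} [Group G] {S : Set G}

lemma exists_word (hSsym : ∀ s ∈ S, s⁻¹ ∈ S) (hSgen : Subgroup.closure S = ⊤) (g : G) :
    ∃ l : List G, (∀ s ∈ l, s ∈ S) ∧ l.prod = g := by
  have hg : g ∈ (Subgroup.closure S).toSubmonoid := by rw [hSgen]; trivial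
  rw [Subgroup.closure_toSubmonoid] at hg
  obtain ⟨l, hl, hprod⟩ := Submonoid.exists_list_of_mem_closure hg
  refine ⟨l, fun s hs => ?_, hprod⟩
  rcases hl s hs with h | h
  · exact h
  · simpa using hSsym s⁻¹ h

lemma wordNorm_bddBelow (g : G) :
    BddBelow {r : ℝ | ∃ l : List G, (∀ s ∈ l, s ∈ S) ∧ l.prod = g ∧ (l.length : ℝ) = r} :=
  ⟨0, fun _ ⟨_, _, _, hr⟩ => hr ▸ Nat.cast_nonneg _⟩

lemma wordNorm_le_length {g : G} {l : List G} (hl : ∀ s ∈ l, s ∈ S) (hprod : l.prod = g) :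
    wordNorm S g ≤ l.length :=
  csInf_le (wordNorm_bddBelow g) ⟨l, hl, hprod, rfl⟩

lemma exists_min_word {g : G} (hex : ∃ l : List G, (∀ s ∈ l, s ∈ S) ∧ l.prod = g) :
    ∃ l : List G, (∀ s ∈ l, s ∈ S) ∧ l.prod = g ∧ (l.length : ℝ) = wordNorm S g := by
  set T : Set ℕ := {n | ∃ l : List G, (∀ s ∈ l, s ∈ S) ∧ l.prod = g ∧ l.length = n} with hT
  have hTne : T.Nonempty := by obtain ⟨l, h1, h2⟩ := hex; exact ⟨l.length, l, h1, h2, rfl⟩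
  obtain ⟨l, h1, h2, h3⟩ := Nat.sInf_mem hTne
  refine ⟨l, h1, h2, le_antisymm ?_ (wordNorm_le_length h1 h2)⟩
  refine le_csInf ⟨l.length, l, h1, h2, rfl⟩ ?_
  rintro r ⟨l', h1', h2', rfl⟩
  have : sInf T ≤ l'.length := Nat.sInf_le ⟨l', h1', h2', rfl⟩
  exact_mod_cast h3 ▸ this

lemma wordNorm_nonneg {g : G} (hex : ∃ l : List G, (∀ s ∈ l, s ∈ S) ∧ l.prod = g) :
    0 ≤ wordNorm S g := by
  obtain ⟨l, _, _, h3⟩ := exists_min_word hex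
  exact h3 ▸ Nat.cast_nonneg _

lemma wordNorm_mul_le {g h : G} (hexg : ∃ l : List G, (∀ s ∈ l, s ∈ S) ∧ l.prod = g)
    (hexh : ∃ l : List G, (∀ s ∈ l, s ∈ S) ∧ l.prod = h) :
    wordNorm S (g * h) ≤ wordNorm S g + wordNorm S h := by
  obtain ⟨l1, h11, h12, h13⟩ := exists_min_word hexg
  obtain ⟨l2, h21, h22, h23⟩ := exists_min_word hexh
  have := wordNorm_le_length (l := l1 ++ l2) (g := g * h)
    (fun s hs => by rcases List.mem_append.1 hs with h | h; exacts [h11 s h, h21 s h])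
    (by rw [List.prod_append, h12, h22])
  rw [List.length_append] at this
  push_cast at this
  linarith [this]

lemma wordNorm_inv_le (hSsym : ∀ s ∈ S, s⁻¹ ∈ S) {g : G}
    (hex : ∃ l : List G, (∀ s ∈ l, s ∈ S) ∧ l.prod = g) :
    wordNorm S g⁻¹ ≤ wordNorm S g := by
  obtain ⟨l, h1, h2, h3⟩ := exists_min_word hex
  have := wordNorm_le_length (l := (l.map fun x => x⁻¹).reverse) (g := g⁻¹)
    (fun s hs => by
      rw [List.mem_reverse, List.mem_map] at hs
      obtain ⟨a, ha, rfl⟩ := hs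
      exact hSsym a (h1 a ha))
    (by rw [← List.prod_inv_reverse, h2])
  rw [List.length_reverse, List.length_map] at this
  linarith [this, h3.ge, h3.le]

end aux

lemma two_pow_bound : ∀ n : ℕ, ∃ k : ℕ, (n : ℝ) < 2 ^ k ∧ ((2:ℝ) ^ k ≤ 2 * n + 2) := by
  intro n
  induction n with
  | zero => exact ⟨0, by norm_num, by norm_num⟩
  | succ n ih =>
    obtain ⟨k, h1, h2⟩ := ih
    by_cases h : ((n : ℝ) + 1) < 2 ^ k
    · exact ⟨k, by push_cast; linarith, by push_cast; linarith⟩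
    · push_neg at h
      have hone : (1:ℝ) ≤ 2 ^ k := one_le_pow₀ (by norm_num)
      refine ⟨k + 1, ?_, ?_⟩
      · push_cast
        rw [pow_succ]
        linarith
      · push_cast
        rw [pow_succ]
        linarith

/-- A compact set together with a sequence approaching it is compact. -/
lemma isCompact_union_range {X : Type*} [MetricSpace X] {K : Set X} (hK : IsCompact K)
    (hKne : K.Nonempty) (f : ℕ → X) (hf : ∀ n, infDist (f n) K ≤ 1 / (n + 1)) :
    IsCompact (K ∪ Set.range f) := by
  refine isCompact_of_finite_subcover fun {ι} U hUo hsub => ?_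
  haveI := Classical.decEq ι
  obtain ⟨t, ht⟩ := hK.elim_finite_subcover U hUo (subset_union_left.trans hsub)
  have hVo : IsOpen (⋃ i ∈ t, U i) := isOpen_biUnion fun i _ => hUo i
  obtain ⟨δ, hδ0, hδ⟩ := hK.exists_thickening_subset_open hVo ht
  obtain ⟨m, hm⟩ := exists_nat_one_div_lt hδ0
  have hidx : ∀ n : ℕ, ∃ i, f n ∈ U i := fun n =>
    Set.mem_iUnion.1 (hsub (Or.inr ⟨n, rfl⟩))
  choose idx hidx' using hidx
  refine ⟨t ∪ (Finset.range (m + 1)).image idx, fun x hx => ?_⟩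
  rcases hx with hxK | ⟨n, rfl⟩
  · have := ht hxK
    exact Set.biUnion_subset_biUnion_left (fun i hi => Finset.mem_union_left _ hi) this
  · by_cases hn : n ≤ m
    · refine Set.mem_biUnion ?_ (hidx' n)
      exact Finset.mem_union_right _
        (Finset.mem_image.2 ⟨n, Finset.mem_range.2 (Nat.lt_succ_of_le hn), rfl⟩)
    · push_neg at hn
      have h1 : infDist (f n) K < δ := by
        have h2 : (1:ℝ) / (n + 1) ≤ 1 / (m + 1) := by
          apply one_div_le_one_div_of_le (by positivity)
          have : (m:ℝ) < n := by exact_mod_cast hn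
          linarith
        linarith [hf n]
      have : f n ∈ Metric.thickening δ K := (mem_thickening_iff_infDist_lt hKne).2 h1
      have := hδ this
      exact Set.biUnion_subset_biUnion_left (fun i hi => Finset.mem_union_left _ hi) this

lemma exists_sigma {Γ X : Type*} [Group Γ] [MetricSpace X] [MulAction Γ X]
    [ProperlyDiscontinuousSMul Γ X]
    (hiso : ∀ (γ : Γ) (a b : X), dist (γ • a) (γ • b) = dist a b)
    {K : Set X} (hK : IsCompact K) (hKne : K.Nonempty) :
    ∃ σ > (0:ℝ), {g : Γ | ∃ a ∈ K, ∃ b ∈ K, dist (g • a) b ≤ σ}.Finite := by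
  by_contra hcon
  push_neg at hcon
  have hG₀ : {γ : Γ | (γ • ·) '' K ∩ K ≠ ∅}.Finite :=
    (ProperlyDiscontinuousSMul.finite_disjoint_inter_image hK hK).subset
      fun _ hγ => Set.nonempty_iff_ne_empty.2 hγ
  have hch : ∀ n : ℕ, ∃ g : Γ, ∃ a, a ∈ K ∧ infDist (g • a) K ≤ 1 / (n + 1) ∧
      (g • ·) '' K ∩ K = ∅ := by
    intro n
    have h1 : (0:ℝ) < 1 / (n + 1) := by positivity
    have h2 : {g : Γ | ∃ a ∈ K, ∃ b ∈ K, dist (g • a) b ≤ 1/(n+1)}.Infinite := hcon _ h1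
    obtain ⟨g, hg, hgn⟩ := (h2.diff hG₀).nonempty
    obtain ⟨a, ha, b, hb, hab⟩ := hg
    exact ⟨g, a, ha, le_trans (infDist_le_dist_of_mem hb) hab, not_not.1 hgn⟩
  choose g a ha hda hg0 using hch
  by_cases hrange : (Set.range g).Finite
  · haveI := hrange.to_subtype
    obtain ⟨y, hy⟩ := Finite.exists_infinite_fiber
      (fun n => (⟨g n, Set.mem_range_self n⟩ : Set.range g))
    set γ := (y : Γ) with hγ
    have hfib : {n : ℕ | g n = γ}.Infinite := by
      have h2 : ((fun n => (⟨g n, Set.mem_range_self n⟩ : Set.range g)) ⁻¹' {y}).Infinite :=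
        Set.infinite_coe_iff.1 hy
      refine h2.mono fun n hn => ?_
      simp only [Set.mem_preimage, Set.mem_singleton_iff] at hn
      simpa [Subtype.ext_iff] using hn
    have hcontin : Continuous fun x : X => infDist (γ • x) K :=
      (continuous_infDist_pt K).comp (Isometry.of_dist_eq (hiso γ)).continuous
    obtain ⟨a₀, ha₀K, hmin⟩ := hK.exists_isMinOn hKne hcontin.continuousOn
    have hzero : infDist (γ • a₀) K = 0 := by
      refine le_antisymm ?_ infDist_nonneg
      by_contra hpos
      push_neg at hpos
      obtain ⟨m, hm⟩ := exists_nat_one_div_lt hpos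
      obtain ⟨n, hn, hmn⟩ := hfib.exists_gt m
      have hle : infDist (γ • a₀) K ≤ infDist (γ • a n) K := by
        have := isMinOn_iff.1 hmin (a n) (ha n)
        simpa using this
      have h2 : infDist (γ • a n) K ≤ 1 / (n + 1) := by rw [← hn]; exact hda n
      have h3 : (1:ℝ) / (n + 1) ≤ 1 / (m + 1) := by
        apply one_div_le_one_div_of_le (by positivity)
        have : (m:ℝ) < n := by exact_mod_cast hmn
        linarith
      linarith
    have hmem : γ • a₀ ∈ K := (hK.isClosed.mem_iff_infDist_zero hKne).2 hzero
    obtain ⟨n, hn⟩ := hfib.nonempty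
    have : (g n • ·) '' K ∩ K ≠ ∅ := by
      rw [← Set.nonempty_iff_ne_empty]
      exact ⟨γ • a₀, ⟨a₀, ha₀K, by rw [hn]⟩, hmem⟩
    exact this (hg0 n)
  · have hL : IsCompact (K ∪ Set.range fun n => g n • a n) :=
      isCompact_union_range hK hKne _ fun n => hda n
    have hfin2 : {γ : Γ | (γ • ·) '' K ∩ (K ∪ Set.range fun n => g n • a n) ≠ ∅}.Finite :=
      (ProperlyDiscontinuousSMul.finite_disjoint_inter_image hK hL).subset
        fun _ hγ => Set.nonempty_iff_ne_empty.2 hγ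
    refine hrange (hfin2.subset ?_)
    rintro γ ⟨n, rfl⟩
    rw [Set.mem_setOf_eq, ← Set.nonempty_iff_ne_empty]
    exact ⟨g n • a n, ⟨a n, ha n, rfl⟩, Or.inr ⟨n, rfl⟩⟩


/-- Milnor–Švarc lemma: if `Γ` acts freely, properly discontinuously, cocompactly and by
isometries on a length space `X`, then for any `x₀ ∈ X` the orbit map `γ ↦ γ·x₀` is a
quasi-isometry from `(Γ, ρ_S)` to `(X,d)`, and the orbit `Γ·x₀` is a net in `X`. -/
theorem milnor_svarc {Γ X : Type*} [Group Γ] [MetricSpace X] [MulAction Γ X]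
    [ProperlyDiscontinuousSMul Γ X]
    -- X is a length space: approximate midpoints exist
    (hlength : ∀ x y : X, ∀ ε > (0:ℝ), ∃ m : X,
      dist x m ≤ dist x y / 2 + ε ∧ dist m y ≤ dist x y / 2 + ε)
    -- the action is by isometries
    (hiso : ∀ (γ : Γ) (a b : X), dist (γ • a) (γ • b) = dist a b)
    -- the action is free
    (hfree : ∀ (γ : Γ) (x : X), γ • x = x → γ = 1)
    -- the action is cocompact
    (hcc : ∃ K : Set X, IsCompact K ∧ ∀ x : X, ∃ γ : Γ, γ • x ∈ K)
    -- a finite symmetric generating set of Γ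
    (S : Set Γ) (hSfin : S.Finite) (hSsym : ∀ s ∈ S, s⁻¹ ∈ S)
    (hSgen : Subgroup.closure S = ⊤)
    (x₀ : X) :
    ∃ lam ≥ (1:ℝ), ∃ C ≥ (0:ℝ),
      (∀ γ₁ γ₂ : Γ,
        lam⁻¹ * wordDist S γ₁ γ₂ - C ≤ dist (γ₁ • x₀) (γ₂ • x₀) ∧
        dist (γ₁ • x₀) (γ₂ • x₀) ≤ lam * wordDist S γ₁ γ₂ + C) ∧
      (∀ x : X, ∃ γ : Γ, dist x (γ • x₀) ≤ C) := by
  have hex : ∀ g : Γ, ∃ l : List Γ, (∀ s ∈ l, s ∈ S) ∧ l.prod = g :=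
    exists_word hSsym hSgen
  obtain ⟨K, hK, hKcc⟩ := hcc
  obtain ⟨δs, hδs⟩ := hKcc x₀
  have hKne : K.Nonempty := ⟨_, hδs⟩
  -- the separation scale σ
  obtain ⟨σ, hσ0, hFfin⟩ := exists_sigma hiso hK hKne
  -- bound N on word norms over the finite set
  obtain ⟨N₀, hN₀⟩ := (hFfin.image (wordNorm S)).bddAbove
  set N : ℝ := max N₀ 0 with hNdef
  have hN : ∀ g ∈ {g : Γ | ∃ a ∈ K, ∃ b ∈ K, dist (g • a) b ≤ σ}, wordNorm S g ≤ N :=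
    fun g hg => le_trans (hN₀ (Set.mem_image_of_mem _ hg)) (le_max_left _ _)
  have hN0 : (0:ℝ) ≤ N := le_max_right _ _
  set W : ℝ := wordNorm S δs with hWdef
  have hW0 : 0 ≤ W := wordNorm_nonneg (hex δs)
  -- net radius
  obtain ⟨R, hRsub⟩ := hK.isBounded.subset_closedBall (δs • x₀)
  have hR0 : 0 ≤ R := by
    have := hRsub hδs
    rw [mem_closedBall, dist_self] at this
    exact this
  have hnet : ∀ x : X, ∃ γ : Γ, dist x (γ • x₀) ≤ R := by
    intro x
    obtain ⟨δ, hδ⟩ := hKcc x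
    refine ⟨δ⁻¹ * δs, ?_⟩
    have h1 : dist (δ • x) (δs • x₀) ≤ R := hRsub hδ
    calc dist x ((δ⁻¹ * δs) • x₀) = dist (δ • x) (δ • ((δ⁻¹ * δs) • x₀)) := (hiso δ _ _).symm
      _ = dist (δ • x) (δs • x₀) := by rw [smul_smul, mul_inv_cancel_left]
      _ ≤ R := h1
  -- dyadic chain bound
  have key : ∀ k : ℕ, ∀ x y : X, ∀ δ δ' : Γ, δ • x ∈ K → δ' • y ∈ K →
      dist x y < 2 ^ k * σ → wordNorm S (δ * δ'⁻¹) ≤ N * 2 ^ k := by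
    intro k
    induction k with
    | zero =>
      intro x y δ δ' h1 h2 hd
      rw [pow_zero, one_mul] at hd
      have hmem : δ * δ'⁻¹ ∈ {g : Γ | ∃ a ∈ K, ∃ b ∈ K, dist (g • a) b ≤ σ} := by
        refine ⟨δ' • y, h2, δ • x, h1, ?_⟩
        have he : (δ * δ'⁻¹) • (δ' • y) = δ • y := by rw [smul_smul, inv_mul_cancel_right]
        rw [he, hiso δ y x, dist_comm]
        exact hd.le
      simpa using hN _ hmem
    | succ k ih =>
      intro x y δ δ' h1 h2 hd
      set d := dist x y with hddef
      have h2s : (2:ℝ) ^ (k+1) = 2 * 2 ^ k := by rw [pow_succ]; ring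
      have hε : (0:ℝ) < (2 ^ (k+1) * σ - d) / 4 := by
        have : d < 2 ^ (k+1) * σ := hd
        linarith
      obtain ⟨m, hm1, hm2⟩ := hlength x y _ hε
      obtain ⟨δm, hδm⟩ := hKcc m
      have hxm : dist x m < 2 ^ k * σ := by
        have : d / 2 + (2 ^ (k+1) * σ - d) / 4 < 2 ^ k * σ := by
          rw [h2s] at hd ⊢
          linarith
        linarith [hm1]
      have hmy : dist m y < 2 ^ k * σ := by
        have : d / 2 + (2 ^ (k+1) * σ - d) / 4 < 2 ^ k * σ := by
          rw [h2s] at hd ⊢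
          linarith
        linarith [hm2]
      have b1 := ih x m δ δm h1 hδm hxm
      have b2 := ih m y δm δ' hδm h2 hmy
      have hmul := wordNorm_mul_le (S := S) (g := δ * δm⁻¹) (h := δm * δ'⁻¹) (hex _) (hex _)
      have heq : (δ * δm⁻¹) * (δm * δ'⁻¹) = δ * δ'⁻¹ := by group
      rw [heq] at hmul
      rw [h2s]
      linarith
  -- lower-bound estimate: word norm controlled by distance
  have hlow : ∀ g : Γ, wordNorm S g ≤ (2 * N / σ) * dist x₀ (g • x₀) + (4 * N + 2 * W) := by
    intro g
    set d := dist x₀ (g • x₀) with hddef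
    have hd0 : 0 ≤ d := dist_nonneg
    obtain ⟨k, hk1, hk2⟩ := two_pow_bound ⌈d / σ⌉₊
    have hdk : d < 2 ^ k * σ := by
      have h1 : d / σ ≤ (⌈d / σ⌉₊ : ℝ) := Nat.le_ceil _
      have h2 : d / σ < 2 ^ k := lt_of_le_of_lt h1 hk1
      calc d = (d / σ) * σ := by field_simp
        _ < 2 ^ k * σ := by exact mul_lt_mul_of_pos_right h2 hσ0
    have hkb : (2:ℝ) ^ k ≤ 2 * (d / σ) + 4 := by
      have h2 : (⌈d / σ⌉₊ : ℝ) < d / σ + 1 := Nat.ceil_lt_add_one (by positivity)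
      linarith
    have hmemK : (δs * g⁻¹) • (g • x₀) ∈ K := by
      rw [smul_smul, inv_mul_cancel_right]
      exact hδs
    have happ := key k x₀ (g • x₀) δs (δs * g⁻¹) hδs hmemK hdk
    have heq2 : δs * (δs * g⁻¹)⁻¹ = δs * g * δs⁻¹ := by group
    rw [heq2] at happ
    have hsplit : wordNorm S g ≤ W + (N * 2 ^ k) + W := by
      have e : g = δs⁻¹ * ((δs * g * δs⁻¹) * δs) := by group
      have c1 : wordNorm S g ≤ wordNorm S δs⁻¹ + wordNorm S ((δs * g * δs⁻¹) * δs) := by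
        conv_lhs => rw [e]
        exact wordNorm_mul_le (hex _) (hex _)
      have c2 : wordNorm S ((δs * g * δs⁻¹) * δs) ≤ wordNorm S (δs * g * δs⁻¹) + W :=
        wordNorm_mul_le (hex _) (hex _)
      have c3 : wordNorm S δs⁻¹ ≤ W := wordNorm_inv_le hSsym (hex δs)
      linarith
    have hfin : N * 2 ^ k ≤ (2 * N / σ) * d + 4 * N := by
      have h3 : N * (2 ^ k) ≤ N * (2 * (d / σ) + 4) := mul_le_mul_of_nonneg_left hkb hN0
      have h4 : N * (2 * (d / σ) + 4) = (2 * N / σ) * d + 4 * N := by field_simp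
      linarith
    linarith
  -- upper-bound estimate
  obtain ⟨M₀, hM₀⟩ := (hSfin.image fun s => dist x₀ (s • x₀)).bddAbove
  set M : ℝ := max M₀ 1 with hMdef
  have hM1 : (1:ℝ) ≤ M := le_max_right _ _
  have hup : ∀ g : Γ, dist x₀ (g • x₀) ≤ M * wordNorm S g := by
    intro g
    have hlist : ∀ l : List Γ, (∀ s ∈ l, s ∈ S) → dist x₀ (l.prod • x₀) ≤ M * l.length := by
      intro l
      induction l with
      | nil => intro _; simp
      | cons s l ih =>
        intro h
        have h1 : dist x₀ (s • x₀) ≤ M := by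
          refine le_trans (hM₀ (Set.mem_image_of_mem _ (h s List.mem_cons_self))) ?_
          exact le_max_left _ _
        have h2 : dist (s • x₀) ((s :: l).prod • x₀) = dist x₀ (l.prod • x₀) := by
          rw [List.prod_cons, mul_smul]
          exact hiso s x₀ (l.prod • x₀)
        have h3 := ih fun t ht => h t (List.mem_cons_of_mem s ht)
        calc dist x₀ ((s :: l).prod • x₀)
            ≤ dist x₀ (s • x₀) + dist (s • x₀) ((s :: l).prod • x₀) := dist_triangle _ _ _
          _ ≤ M + M * l.length := by rw [h2]; exact add_le_add h1 h3
          _ = M * (s :: l).length := by rw [List.length_cons]; push_cast; ring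
    obtain ⟨l, h1, h2, h3⟩ := exists_min_word (hex g)
    calc dist x₀ (g • x₀) = dist x₀ (l.prod • x₀) := by rw [h2]
      _ ≤ M * l.length := hlist l h1
      _ = M * wordNorm S g := by rw [h3]
  -- assemble constants
  set lam : ℝ := max 1 (max M (2 * N / σ)) with hlamdef
  set B : ℝ := 4 * N + 2 * W with hBdef
  set C : ℝ := max R B with hCdef
  have hB0 : 0 ≤ B := by positivity
  have hlam1 : (1:ℝ) ≤ lam := le_max_left _ _
  have hlampos : (0:ℝ) < lam := lt_of_lt_of_le one_pos hlam1
  have hMlam : M ≤ lam := le_trans (le_max_left _ _) (le_max_right _ _)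
  have halam : 2 * N / σ ≤ lam := le_trans (le_max_right _ _) (le_max_right _ _)
  have hC0 : (0:ℝ) ≤ C := le_trans hR0 (le_max_left _ _)
  have hBC : B ≤ C := le_max_right _ _
  have hRC : R ≤ C := le_max_left _ _
  refine ⟨lam, hlam1, C, hC0, fun γ₁ γ₂ => ?_, fun x => ?_⟩
  · -- quasi-isometry bounds
    have hgd : dist (γ₁ • x₀) (γ₂ • x₀) = dist x₀ ((γ₁⁻¹ * γ₂) • x₀) := by
      have h1 : γ₁ • ((γ₁⁻¹ * γ₂) • x₀) = γ₂ • x₀ := by rw [smul_smul, mul_inv_cancel_left]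
      rw [← h1, hiso]
    have hwd : wordDist S γ₁ γ₂ = wordNorm S (γ₁⁻¹ * γ₂) := rfl
    set g : Γ := γ₁⁻¹ * γ₂ with hgdef
    set w : ℝ := wordNorm S g with hwdef
    set d : ℝ := dist x₀ (g • x₀) with hd2def
    have hd0 : 0 ≤ d := dist_nonneg
    have hw0 : 0 ≤ w := wordNorm_nonneg (hex g)
    constructor
    · -- lower bound
      have h1 : w ≤ lam * d + B := by
        have := hlow g
        have h2 : (2 * N / σ) * d ≤ lam * d := mul_le_mul_of_nonneg_right halam hd0
        rw [← hwdef, ← hd2def] at this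
        linarith
      have h2 : lam⁻¹ * w ≤ lam⁻¹ * (lam * d + B) :=
        mul_le_mul_of_nonneg_left h1 (inv_nonneg.2 hlampos.le)
      have h3 : lam⁻¹ * (lam * d + B) = d + lam⁻¹ * B := by
        rw [mul_add, ← mul_assoc, inv_mul_cancel₀ hlampos.ne', one_mul]
      have h4 : lam⁻¹ * B ≤ B := by
        have hinvle : lam⁻¹ ≤ 1 := by
          rw [inv_le_one_iff₀]
          right; exact hlam1
        nlinarith
      rw [hgd, hwd]
      linarith
    · -- upper bound
      have h1 : d ≤ M * w := hup g
      have h2 : M * w ≤ lam * w := mul_le_mul_of_nonneg_right hMlam hw0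
      rw [hgd, hwd]
      linarith
  · obtain ⟨γ, hγ⟩ := hnet x
    exact ⟨γ, le_trans hγ hRC⟩
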